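/- Let a ∈ (0,1) and define t₂(β) = (2/√(1+β²))·(π − arcsin√((1−a²)(1+β²))) for β ∈ [−a/√(1−a²), a/√(1−a²)]. Then: (1) t₂ is an even function; (2) t₂ is strictly decreasing on [0, a/√(1−a²)] and strictly increasing on [−a/√(1−a²), 0]; (3) the range of t₂ is the segment [π·√(1−a²), 2(π − arcsin√(1−a²))]. -/
import Mathlib


open Real Set

/-- The candidate sub-Riemannian distance `t₂(β)` in the long-time case. -/
noncomputable def t₂ (a β : ℝ) : ℝ :=
  2 / Real.sqrt (1 + β^2) * (Real.pi - Real.arcsin (Real.sqrt ((1 - a^2) * (1 + β^2))))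

/-- The function `t₂` is even, strictly decreasing on `[0, a/√(1−a²)]`, strictly increasing
on `[−a/√(1−a²), 0]`, and its range is `[π √(1−a²), 2(π − arcsin √(1−a²))]`. -/
theorem t₂_properties (a : ℝ) (ha : a ∈ Set.Ioo (0:ℝ) 1) :
    (∀ β : ℝ, t₂ a (-β) = t₂ a β) ∧
    StrictAntiOn (t₂ a) (Set.Icc 0 (a / Real.sqrt (1 - a^2))) ∧
    StrictMonoOn (t₂ a) (Set.Icc (-(a / Real.sqrt (1 - a^2))) 0) ∧
    t₂ a '' Set.Icc (-(a / Real.sqrt (1 - a^2))) (a / Real.sqrt (1 - a^2)) =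
      Set.Icc (Real.pi * Real.sqrt (1 - a^2))
        (2 * (Real.pi - Real.arcsin (Real.sqrt (1 - a^2)))) := by
  obtain ⟨ha0, ha1⟩ := ha
  set c := Real.sqrt (1 - a^2) with hc
  have h1a : (0:ℝ) < 1 - a^2 := by nlinarith
  have hc_pos : 0 < c := Real.sqrt_pos.2 h1a
  have hc2 : c^2 = 1 - a^2 := Real.sq_sqrt h1a.le
  set m := a / c with hm
  have hm_pos : 0 < m := div_pos ha0 hc_pos
  have hmsq : 1 + m^2 = 1 / c^2 := by
    rw [hm]
    field_simp
    nlinarith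
  have h1m : (1 - a^2) * (1 + m^2) = 1 := by
    rw [← hc2, hmsq]
    field_simp
  have heven : ∀ β : ℝ, t₂ a (-β) = t₂ a β := by intro β; simp [t₂]
  have hanti : StrictAntiOn (t₂ a) (Icc 0 m) := by
    intro β₁ h₁ β₂ h₂ hlt
    have hb1 : 0 ≤ β₁ := h₁.1
    have hsqlt : β₁^2 < β₂^2 := by nlinarith
    have hbm : β₂^2 ≤ m^2 := by nlinarith [h₂.2, h₂.1]
    have harg2le : (1 - a^2) * (1 + β₂^2) ≤ 1 := by nlinarith
    have hargnn : 0 ≤ (1 - a^2) * (1 + β₁^2) := by positivity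
    have hsltarg : (1 - a^2) * (1 + β₁^2) < (1 - a^2) * (1 + β₂^2) :=
      mul_lt_mul_of_pos_left (by linarith) h1a
    have hsqrtlt : Real.sqrt ((1 - a^2) * (1 + β₁^2)) < Real.sqrt ((1 - a^2) * (1 + β₂^2)) :=
      Real.sqrt_lt_sqrt hargnn hsltarg
    have hs2le1 : Real.sqrt ((1 - a^2) * (1 + β₂^2)) ≤ 1 := Real.sqrt_le_one.mpr harg2le
    have hs1le1 : Real.sqrt ((1 - a^2) * (1 + β₁^2)) ≤ 1 := le_of_lt (lt_of_lt_of_le hsqrtlt hs2le1)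
    have harcsin : Real.arcsin (Real.sqrt ((1 - a^2) * (1 + β₁^2))) <
        Real.arcsin (Real.sqrt ((1 - a^2) * (1 + β₂^2))) :=
      Real.strictMonoOn_arcsin ⟨by linarith [Real.sqrt_nonneg ((1 - a^2) * (1 + β₁^2))], hs1le1⟩
        ⟨by linarith [Real.sqrt_nonneg ((1 - a^2) * (1 + β₂^2))], hs2le1⟩ hsqrtlt
    have hg : 2 / Real.sqrt (1 + β₂^2) < 2 / Real.sqrt (1 + β₁^2) := by
      apply div_lt_div_of_pos_left (by norm_num) (Real.sqrt_pos.2 (by positivity))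
      exact Real.sqrt_lt_sqrt (by positivity) (by linarith)
    have hh : Real.pi - Real.arcsin (Real.sqrt ((1 - a^2) * (1 + β₂^2))) <
        Real.pi - Real.arcsin (Real.sqrt ((1 - a^2) * (1 + β₁^2))) := by linarith
    have hgpos : 0 ≤ 2 / Real.sqrt (1 + β₂^2) := by positivity
    have hhpos : 0 ≤ Real.pi - Real.arcsin (Real.sqrt ((1 - a^2) * (1 + β₂^2))) := by
      have := Real.arcsin_le_pi_div_two (Real.sqrt ((1 - a^2) * (1 + β₂^2)))
      linarith [Real.pi_pos]
    exact mul_lt_mul'' hg hh hgpos hhpos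
  have hmono : StrictMonoOn (t₂ a) (Icc (-m) 0) := by
    intro β₁ h₁ β₂ h₂ hlt
    have := hanti ⟨neg_nonneg.2 h₂.2, by linarith [h₂.1]⟩
      ⟨neg_nonneg.2 (le_of_lt (lt_of_lt_of_le hlt h₂.2)), by linarith [h₁.1]⟩ (by linarith)
    rwa [heven, heven] at this
  have ht0 : t₂ a 0 = 2 * (Real.pi - Real.arcsin c) := by
    simp [t₂, hc]
  have hsqm : Real.sqrt (1 + m^2) = 1 / c := by
    rw [show 1 + m^2 = (1/c)^2 by rw [hmsq]; ring]
    exact Real.sqrt_sq (by positivity)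
  have htm : t₂ a m = Real.pi * c := by
    rw [t₂, h1m, hsqm, Real.sqrt_one, Real.arcsin_one]
    field_simp
    ring
  have hcont : Continuous (t₂ a) := by
    have h1 : ∀ β : ℝ, Real.sqrt (1 + β^2) ≠ 0 := fun β => (Real.sqrt_pos.2 (by positivity)).ne'
    unfold t₂
    exact (continuous_const.div (by continuity) h1).mul
      (continuous_const.sub (Real.continuous_arcsin.comp (by continuity)))
  have himg0 : t₂ a '' Icc 0 m = Icc (t₂ a m) (t₂ a 0) := by
    apply Subset.antisymm
    · rintro x ⟨β, hβ, rfl⟩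
      exact ⟨hanti.antitoneOn hβ (right_mem_Icc.2 hm_pos.le) hβ.2,
             hanti.antitoneOn (left_mem_Icc.2 hm_pos.le) hβ hβ.1⟩
    · exact intermediate_value_Icc' hm_pos.le hcont.continuousOn
  have hsplit : Icc (-m) m = Icc (-m) 0 ∪ Icc 0 m :=
    (Icc_union_Icc_eq_Icc (by linarith) hm_pos.le).symm
  have hneg : t₂ a '' Icc (-m) 0 = t₂ a '' Icc 0 m := by
    ext x
    simp only [mem_image]
    constructor
    · rintro ⟨β, hβ, rfl⟩
      exact ⟨-β, ⟨neg_nonneg.2 hβ.2, by linarith [hβ.1]⟩, heven β⟩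
    · rintro ⟨β, hβ, rfl⟩
      exact ⟨-β, ⟨by linarith [hβ.2], neg_nonpos.2 hβ.1⟩, by rw [heven]⟩
  refine ⟨heven, hanti, hmono, ?_⟩
  rw [hsplit, image_union, hneg, union_self, himg0, htm, ht0]
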